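/- (Score of the targeted Bernoulli fluctuation likelihood equals the efficient influence function.) Assume Y takes values in {0,1} and there is κ > 0 with κ ≤ Q̄^{(a)}(X) ≤ 1 − κ almost surely for a = 0,1. Define W(X) := (Ψ(X) − β₀^⊤ v(X)) v(X), Z(ε) := E_P[exp(ε^⊤ G⁻¹ W(X))], the fluctuated success probability p_ε := logistic( logit(Q̄^{(A)}(X)) + (𝟙{A=1}/g(1,X) − 𝟙{A=0}/g(0,X)) ε^⊤ G⁻¹ v(X) ), and the log-likelihood (up to ε-independent constants) ℓ(ε, O) := Y log p_ε + (1 − Y) log(1 − p_ε) + ε^⊤ G⁻¹ W(X) − log Z(ε). Then for P-almost every ω, the map ε ↦ ℓ(ε, O(ω)) is differentiable at ε = 0 with gradient equal to D*(O(ω)). -/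

import Mathlib

set_option maxHeartbeats 1000000
set_option synthInstance.maxHeartbeats 400000

open MeasureTheory Matrix

noncomputable def dotL {p : ℕ} (w : Fin p → ℝ) : (Fin p → ℝ) →L[ℝ] ℝ :=
  ∑ i, w i • ContinuousLinearMap.proj i

@[simp] lemma dotL_apply {p : ℕ} (w u : Fin p → ℝ) : dotL w u = u ⬝ᵥ w := by
  simp [dotL, dotProduct, mul_comm]

lemma dotL_continuous {p : ℕ} : Continuous (fun w : Fin p → ℝ => dotL w) := by
  unfold dotL
  exact continuous_finset_sum _ fun i _ => (continuous_apply i).smul continuous_const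

lemma hasFDerivAt_dot {p : ℕ} (w x : Fin p → ℝ) :
    HasFDerivAt (fun ε : Fin p → ℝ => ε ⬝ᵥ w) (dotL w) x := by
  have h := (dotL w).hasFDerivAt (x := x)
  have he : ⇑(dotL w) = fun ε : Fin p → ℝ => ε ⬝ᵥ w := funext fun u => dotL_apply w u
  rwa [he] at h

lemma abs_dotProduct_le {p : ℕ} (u w : Fin p → ℝ) (M : ℝ) (hM : ∀ i, |w i| ≤ M) :
    |u ⬝ᵥ w| ≤ (p * M) * ‖u‖ := by
  calc |∑ i, u i * w i| ≤ ∑ i, |u i * w i| := Finset.abs_sum_le_sum_abs _ _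
    _ ≤ ∑ _i : Fin p, ‖u‖ * M := Finset.sum_le_sum fun i _ => by
        rw [abs_mul]
        exact mul_le_mul (by simpa using norm_le_pi_norm u i) (hM i) (abs_nonneg _)
          (norm_nonneg _)
    _ = (p * M) * ‖u‖ := by
        simp [Finset.sum_const, Finset.card_univ, nsmul_eq_mul]; ring

lemma dotL_norm_le {p : ℕ} (w : Fin p → ℝ) (M : ℝ) (hM0 : 0 ≤ M) (hM : ∀ i, |w i| ≤ M) :
    ‖dotL w‖ ≤ p * M := by
  refine ContinuousLinearMap.opNorm_le_bound _ (by positivity) fun u => ?_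
  rw [dotL_apply]
  simpa using abs_dotProduct_le u w M hM

lemma Zderiv_aux {Ω : Type*} (m0 : MeasurableSpace Ω) (P : Measure Ω) [IsProbabilityMeasure P]
    {p : ℕ} (w : Ω → Fin p → ℝ) (hwc : ∀ i, Measurable fun ω => w ω i)
    (Mw : ℝ) (hMw0 : 0 ≤ Mw) (hwb : ∀ᵐ ω ∂P, ∀ i, |w ω i| ≤ Mw)
    (hw0 : ∀ i, ∫ ω, w ω i ∂P = 0) :
    HasFDerivAt (fun ε : Fin p → ℝ => ∫ ω, Real.exp (ε ⬝ᵥ w ω) ∂P)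
      (0 : (Fin p → ℝ) →L[ℝ] ℝ) 0 := by
  have hwm : Measurable w := measurable_pi_lambda _ hwc
  have hdotmeas : ∀ ε : Fin p → ℝ, Measurable fun ω => ε ⬝ᵥ w ω := by
    intro ε
    have he : (fun ω => ε ⬝ᵥ w ω) = fun ω => ∑ i, ε i * w ω i := rfl
    rw [he]; exact Finset.measurable_sum _ fun i _ => (hwc i).const_mul _
  have hdLmeas : AEStronglyMeasurable (fun ω => dotL (w ω)) P :=
    (dotL_continuous.comp_stronglyMeasurable hwm.stronglyMeasurable).aestronglyMeasurable
  have hwint : ∀ i, Integrable (fun ω => w ω i) P := fun i =>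
    (integrable_const Mw).mono' (hwc i).aestronglyMeasurable
      (hwb.mono fun ω h => by simpa [Real.norm_eq_abs] using h i)
  have key := hasFDerivAt_integral_of_dominated_of_fderiv_le (μ := P) (𝕜 := ℝ)
    (F := fun ε ω => Real.exp (ε ⬝ᵥ w ω))
    (F' := fun ε ω => Real.exp (ε ⬝ᵥ w ω) • dotL (w ω))
    (x₀ := 0) (bound := fun _ => Real.exp (p * Mw) * (p * Mw)) 
    (Metric.ball_mem_nhds _ one_pos)
    (Filter.Eventually.of_forall fun ε =>
      (Real.measurable_exp.comp (hdotmeas ε)).aestronglyMeasurable)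
    (by
      show Integrable (fun ω => Real.exp ((0 : Fin p → ℝ) ⬝ᵥ w ω)) P
      have he : (fun ω => Real.exp ((0 : Fin p → ℝ) ⬝ᵥ w ω)) = fun _ => (1:ℝ) := by
        funext ω; simp
      rw [he]; exact integrable_const 1)
    ((Real.measurable_exp.comp (hdotmeas 0)).aestronglyMeasurable.smul hdLmeas)
    (by
      filter_upwards [hwb] with ω hωb
      intro ε hε
      have hεn : ‖ε‖ ≤ 1 := by
        have := Metric.mem_ball.mp hε
        simpa [dist_zero_right] using this.le
      have h1 : Real.exp (ε ⬝ᵥ w ω) ≤ Real.exp (p * Mw) := by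
        apply Real.exp_le_exp.mpr
        calc ε ⬝ᵥ w ω ≤ |ε ⬝ᵥ w ω| := le_abs_self _
          _ ≤ (p * Mw) * ‖ε‖ := abs_dotProduct_le _ _ _ hωb
          _ ≤ (p * Mw) * 1 := mul_le_mul_of_nonneg_left hεn (by positivity)
          _ = p * Mw := mul_one _
      refine ContinuousLinearMap.opNorm_le_bound _ (by positivity) fun u => ?_
      have happ : (Real.exp (ε ⬝ᵥ w ω) • dotL (w ω)) u
          = Real.exp (ε ⬝ᵥ w ω) * (u ⬝ᵥ w ω) := by simp
      rw [happ]
      have h2 : |u ⬝ᵥ w ω| ≤ (p * Mw) * ‖u‖ := abs_dotProduct_le _ _ _ hωb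
      calc ‖Real.exp (ε ⬝ᵥ w ω) * (u ⬝ᵥ w ω)‖
          = Real.exp (ε ⬝ᵥ w ω) * |u ⬝ᵥ w ω| := by
            rw [Real.norm_eq_abs, abs_mul, abs_of_pos (Real.exp_pos _)]
        _ ≤ Real.exp (p * Mw) * ((p * Mw) * ‖u‖) :=
            mul_le_mul h1 h2 (abs_nonneg _) (Real.exp_pos _).le
        _ = Real.exp (p * Mw) * (p * Mw) * ‖u‖ := by ring)
    (integrable_const _)
    (Filter.Eventually.of_forall fun ω ε _ => (hasFDerivAt_dot (w ω) ε).exp)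
  have hF'eq : (fun ω => Real.exp ((0 : Fin p → ℝ) ⬝ᵥ w ω) • dotL (w ω))
      = fun ω => dotL (w ω) := by
    funext ω
    simp
  rw [hF'eq] at key
  have hFi : Integrable (fun ω => dotL (w ω)) P := by
    refine (integrable_const ((p:ℝ) * Mw)).mono' hdLmeas ?_
    filter_upwards [hwb] with ω hωb
    exact dotL_norm_le _ _ hMw0 hωb
  have hD0 : (∫ ω, dotL (w ω) ∂P) = 0 := by
    ext u
    rw [ContinuousLinearMap.integral_apply hFi]
    simp only [dotL_apply, ContinuousLinearMap.zero_apply]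
    have he : (fun ω => u ⬝ᵥ w ω) = fun ω => ∑ i, u i * w ω i := rfl
    have hs : ∫ ω, ∑ i, u i * w ω i ∂P = ∑ i, ∫ ω, u i * w ω i ∂P :=
      integral_finset_sum _ fun i _ => (hwint i).const_mul _
    have hm : ∀ i, ∫ ω, u i * w ω i ∂P = u i * ∫ ω, w ω i ∂P := fun i =>
      integral_const_mul _ _
    rw [he, hs]
    simp [hm, hw0]
  rwa [hD0] at key

/-- (Score of the targeted Bernoulli fluctuation likelihood equals the
efficient influence function.) Assume `Y ∈ {0,1}` and `κ ≤ Q̄^{(a)}(X) ≤ 1 − κ` a.s. With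
`W(X) := (Ψ(X) − β₀ᵀ v(X)) v(X)`, `Z(ε) := E_P[exp(εᵀ G⁻¹ W(X))]`, fluctuated success
probability `p_ε := logistic(logit(Q̄^{(A)}(X)) + (𝟙{A=1}/g(1,X) − 𝟙{A=0}/g(0,X)) εᵀ G⁻¹ v(X))`,
and log-likelihood `ℓ(ε,O) := Y log p_ε + (1−Y) log(1−p_ε) + εᵀ G⁻¹ W(X) − log Z(ε)`, for
`P`-a.e. `ω` the map `ε ↦ ℓ(ε, O(ω))` is differentiable at `ε = 0` with gradient `D*(O(ω))`. -/
theorem stmt_15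
    {Ω 𝒳 : Type*} [MeasurableSpace Ω] [MeasurableSpace 𝒳]
    (P : Measure Ω) [IsProbabilityMeasure P]
    (X : Ω → 𝒳) (hX : Measurable X)
    (A : Ω → Bool) (hA : Measurable A)
    (Y : Ω → ℝ) (hYm : Measurable Y) (hY01 : ∀ ω, Y ω = 0 ∨ Y ω = 1)
    (mX : MeasurableSpace Ω) (hmX : mX = MeasurableSpace.comap X inferInstance)
    (g : Bool → Ω → ℝ) (hgm : ∀ a, Measurable[mX] (g a))
    (hgv : ∀ a, g a =ᵐ[P] P[fun ω => if A ω = a then (1:ℝ) else 0|mX])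
    (δ : ℝ) (hδ : 0 < δ) (hgb : ∀ a, ∀ᵐ ω ∂P, δ ≤ g a ω ∧ g a ω ≤ 1 - δ)
    (Qbar : Bool → Ω → ℝ)
    (hQbar : ∀ a ω, Qbar a ω
      = (P[fun ω' => (if A ω' = a then (1:ℝ) else 0) * Y ω'|mX]) ω / g a ω)
    (κ : ℝ) (hκ : 0 < κ)
    (hQκ : ∀ a, ∀ᵐ ω ∂P, κ ≤ Qbar a ω ∧ Qbar a ω ≤ 1 - κ)
    (Ψ : Ω → ℝ) (hΨ : ∀ ω, Ψ ω = Qbar true ω - Qbar false ω)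
    (QbarA : Ω → ℝ)
    (hQbarA : ∀ ω, QbarA ω
      = (if A ω = true then (1:ℝ) else 0) * Qbar true ω
        + (if A ω = false then (1:ℝ) else 0) * Qbar false ω)
    (Δstar : Ω → ℝ)
    (hΔstar : ∀ ω, Δstar ω
      = ((if A ω = true then (1:ℝ) else 0) / g true ω
          - (if A ω = false then (1:ℝ) else 0) / g false ω) * (Y ω - QbarA ω))
    {p : ℕ} (v : 𝒳 → Fin p → ℝ) (hvm : Measurable v) (hvb : ∃ C, ∀ x i, |v x i| ≤ C)
    (G : Matrix (Fin p) (Fin p) ℝ)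
    (hG : G = Matrix.of fun i j => ∫ ω, v (X ω) i * v (X ω) j ∂P)
    (hGunit : IsUnit G)
    (β₀ : Fin p → ℝ) (hβ₀ : β₀ = G⁻¹ *ᵥ fun i => ∫ ω, Ψ ω * v (X ω) i ∂P)
    (Dstar : Ω → Fin p → ℝ)
    (hDstar : ∀ ω, Dstar ω
      = G⁻¹ *ᵥ fun i => (Δstar ω + Ψ ω - β₀ ⬝ᵥ v (X ω)) * v (X ω) i)
    (W : Ω → Fin p → ℝ)
    (hW : ∀ ω, W ω = fun i => (Ψ ω - β₀ ⬝ᵥ v (X ω)) * v (X ω) i)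
    (Z : (Fin p → ℝ) → ℝ)
    (hZ : ∀ ε, Z ε = ∫ ω, Real.exp (ε ⬝ᵥ (G⁻¹ *ᵥ W ω)) ∂P)
    (pfl : (Fin p → ℝ) → Ω → ℝ)
    (hpfl : ∀ ε ω, pfl ε ω
      = (1 + Real.exp (-(Real.log (QbarA ω / (1 - QbarA ω)) +
          ((if A ω = true then (1:ℝ) else 0) / g true ω
            - (if A ω = false then (1:ℝ) else 0) / g false ω) *
          (ε ⬝ᵥ (G⁻¹ *ᵥ v (X ω))))))⁻¹)
    (ℓ : (Fin p → ℝ) → Ω → ℝ)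
    (hℓ : ∀ ε ω, ℓ ε ω
      = Y ω * Real.log (pfl ε ω) + (1 - Y ω) * Real.log (1 - pfl ε ω)
        + ε ⬝ᵥ (G⁻¹ *ᵥ W ω) - Real.log (Z ε)) :
    ∀ᵐ ω ∂P, ∃ L : (Fin p → ℝ) →L[ℝ] ℝ,
      HasFDerivAt (fun ε => ℓ ε ω) L 0 ∧ ∀ u, L u = u ⬝ᵥ Dstar ω := by
  classical
  rename_i m0 m𝒳 instP
  -- measurability preliminaries
  have hle : mX ≤ m0 := by
    rw [hmX]; exact hX.comap_le
  have hQm : ∀ a, Measurable[m0] (Qbar a) := by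
    intro a
    have h1 : Measurable[m0] (P[fun ω' => (if A ω' = a then (1:ℝ) else 0) * Y ω'|mX]) :=
      (stronglyMeasurable_condExp.mono hle).measurable
    have h2 : Measurable[m0] (g a) := (hgm a).mono hle le_rfl
    have he : Qbar a = fun ω =>
        (P[fun ω' => (if A ω' = a then (1:ℝ) else 0) * Y ω'|mX]) ω / g a ω :=
      funext (hQbar a)
    rw [he]; exact h1.div h2
  have hvX : Measurable[m0] fun ω => v (X ω) := hvm.comp hX
  have hvXj : ∀ j, Measurable[m0] fun ω => v (X ω) j := fun j =>
    (measurable_pi_apply j).comp hvX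
  have hΨm : Measurable[m0] Ψ := by
    have he : Ψ = fun ω => Qbar true ω - Qbar false ω := funext hΨ
    rw [he]; exact (hQm true).sub (hQm false)
  have hbm : Measurable[m0] fun ω => β₀ ⬝ᵥ v (X ω) := by
    have he : (fun ω => β₀ ⬝ᵥ v (X ω)) = fun ω => ∑ k, β₀ k * v (X ω) k := rfl
    rw [he]; exact Finset.measurable_sum _ fun k _ => (hvXj k).const_mul _
  have hWj : ∀ j, Measurable[m0] fun ω => W ω j := by
    intro j
    have he : (fun ω => W ω j) = fun ω => (Ψ ω - β₀ ⬝ᵥ v (X ω)) * v (X ω) j :=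
      funext fun ω => by rw [hW]
    rw [he]; exact (hΨm.sub hbm).mul (hvXj j)
  have hwi : ∀ i, Measurable[m0] fun ω => (G⁻¹ *ᵥ W ω) i := by
    intro i
    have he : (fun ω => (G⁻¹ *ᵥ W ω) i) = fun ω => ∑ j, G⁻¹ i j * W ω j := rfl
    rw [he]; exact Finset.measurable_sum _ fun j _ => (hWj j).const_mul _
  -- bounds
  obtain ⟨C, hC⟩ := hvb
  set Cv : ℝ := max C 0 with hCvdef
  have hCv : ∀ x i, |v x i| ≤ Cv := fun x i => (hC x i).trans (le_max_left _ _)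
  have hCv0 : (0:ℝ) ≤ Cv := le_max_right _ _
  set B1 : ℝ := ∑ k : Fin p, |β₀ k| * Cv with hB1def
  have hB1 : (0:ℝ) ≤ B1 := Finset.sum_nonneg fun k _ => mul_nonneg (abs_nonneg _) hCv0
  have hb : ∀ ω', |β₀ ⬝ᵥ v (X ω')| ≤ B1 := by
    intro ω'
    calc |∑ k, β₀ k * v (X ω') k| ≤ ∑ k, |β₀ k * v (X ω') k| :=
          Finset.abs_sum_le_sum_abs _ _
      _ ≤ B1 := Finset.sum_le_sum fun k _ => by
          rw [abs_mul]
          exact mul_le_mul_of_nonneg_left (hCv _ _) (abs_nonneg _)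
  have hΨb : ∀ᵐ ω ∂P, |Ψ ω| ≤ 2 := by
    filter_upwards [hQκ true, hQκ false] with ω h1 h2
    rw [hΨ, abs_le]
    constructor <;> linarith [h1.1, h1.2, h2.1, h2.2, hκ]
  set BW : ℝ := (2 + B1) * Cv with hBWdef
  have hBW0 : (0:ℝ) ≤ BW := mul_nonneg (by linarith) hCv0
  have hWb : ∀ᵐ ω ∂P, ∀ j, |W ω j| ≤ BW := by
    filter_upwards [hΨb] with ω hΨω
    intro j
    rw [hW]
    calc |(Ψ ω - β₀ ⬝ᵥ v (X ω)) * v (X ω) j|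
        = |Ψ ω - β₀ ⬝ᵥ v (X ω)| * |v (X ω) j| := abs_mul _ _
      _ ≤ (2 + B1) * Cv := mul_le_mul
          ((abs_sub _ _).trans (add_le_add hΨω (hb ω))) (hCv _ _) (abs_nonneg _)
          (by linarith)
  set MG : ℝ := ∑ i : Fin p, ∑ j : Fin p, |G⁻¹ i j| with hMGdef
  have hMG0 : (0:ℝ) ≤ MG := Finset.sum_nonneg fun i _ =>
    Finset.sum_nonneg fun j _ => abs_nonneg _
  set Mw : ℝ := MG * BW with hMwdef
  have hMw0 : (0:ℝ) ≤ Mw := mul_nonneg hMG0 hBW0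
  have hwb : ∀ᵐ ω ∂P, ∀ i, |(G⁻¹ *ᵥ W ω) i| ≤ Mw := by
    filter_upwards [hWb] with ω hWω
    intro i
    have he : (G⁻¹ *ᵥ W ω) i = ∑ j, G⁻¹ i j * W ω j := rfl
    rw [he]
    calc |∑ j, G⁻¹ i j * W ω j| ≤ ∑ j, |G⁻¹ i j * W ω j| :=
          Finset.abs_sum_le_sum_abs _ _
      _ ≤ ∑ j, |G⁻¹ i j| * BW := Finset.sum_le_sum fun j _ => by
          rw [abs_mul]
          exact mul_le_mul_of_nonneg_left (hWω j) (abs_nonneg _)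
      _ = (∑ j, |G⁻¹ i j|) * BW := by rw [Finset.sum_mul]
      _ ≤ MG * BW := mul_le_mul_of_nonneg_right
          (Finset.single_le_sum (f := fun i => ∑ j : Fin p, |G⁻¹ i j|)
            (fun i _ => Finset.sum_nonneg fun j _ => abs_nonneg _)
            (Finset.mem_univ i)) hBW0
  -- integrability helper
  have hint : ∀ (f : Ω → ℝ), Measurable[m0] f → ∀ c : ℝ,
      (∀ᵐ ω ∂P, |f ω| ≤ c) → Integrable f P := by
    intro f hf c h
    exact (integrable_const c).mono' hf.aestronglyMeasurable
      (by simpa [Real.norm_eq_abs] using h)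
  have hWint : ∀ j, Integrable (fun ω => W ω j) P := fun j =>
    hint _ (hWj j) BW (hWb.mono fun ω h => h j)
  have hvvint : ∀ k j, Integrable (fun ω => v (X ω) k * v (X ω) j) P := fun k j =>
    hint _ ((hvXj k).mul (hvXj j)) (Cv * Cv) (Filter.Eventually.of_forall fun ω => by
      rw [abs_mul]
      exact mul_le_mul (hCv _ _) (hCv _ _) (abs_nonneg _) hCv0)
  have hΨvint : ∀ j, Integrable (fun ω => Ψ ω * v (X ω) j) P := fun j =>
    hint _ (hΨm.mul (hvXj j)) (2 * Cv) (hΨb.mono fun ω h => by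
      rw [abs_mul]
      exact mul_le_mul h (hCv _ _) (abs_nonneg _) (by norm_num))
  have hbvint : ∀ j, Integrable (fun ω => (β₀ ⬝ᵥ v (X ω)) * v (X ω) j) P := fun j =>
    hint _ (hbm.mul (hvXj j)) (B1 * Cv) (Filter.Eventually.of_forall fun ω => by
      rw [abs_mul]
      exact mul_le_mul (hb ω) (hCv _ _) (abs_nonneg _) hB1)
  -- mean-zero property of W
  have hGdet : IsUnit G.det := (Matrix.isUnit_iff_isUnit_det G).mp hGunit
  have hGinv : G * G⁻¹ = 1 := Matrix.mul_nonsing_inv G hGdet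
  have hGβ : G *ᵥ β₀ = fun i => ∫ ω, Ψ ω * v (X ω) i ∂P := by
    rw [hβ₀, Matrix.mulVec_mulVec, hGinv, Matrix.one_mulVec]
  have hW0 : ∀ j, ∫ ω, W ω j ∂P = 0 := by
    intro j
    have h1 : (fun ω => W ω j)
        = fun ω => Ψ ω * v (X ω) j - (β₀ ⬝ᵥ v (X ω)) * v (X ω) j :=
      funext fun ω => by rw [hW]; ring
    have hsub : ∫ ω, (Ψ ω * v (X ω) j - (β₀ ⬝ᵥ v (X ω)) * v (X ω) j) ∂P
        = (∫ ω, Ψ ω * v (X ω) j ∂P) - ∫ ω, (β₀ ⬝ᵥ v (X ω)) * v (X ω) j ∂P :=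
      integral_sub (hΨvint j) (hbvint j)
    rw [h1, hsub]
    have h2 : ∫ ω, (β₀ ⬝ᵥ v (X ω)) * v (X ω) j ∂P
        = ∑ k, β₀ k * ∫ ω, v (X ω) k * v (X ω) j ∂P := by
      have he : (fun ω => (β₀ ⬝ᵥ v (X ω)) * v (X ω) j)
          = fun ω => ∑ k, β₀ k * (v (X ω) k * v (X ω) j) := by
        funext ω
        rw [dotProduct, Finset.sum_mul]
        exact Finset.sum_congr rfl fun k _ => mul_assoc _ _ _
      have hfs : ∫ ω, ∑ k, β₀ k * (v (X ω) k * v (X ω) j) ∂P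
          = ∑ k, ∫ ω, β₀ k * (v (X ω) k * v (X ω) j) ∂P :=
        integral_finset_sum _ fun k _ => (hvvint k j).const_mul _
      have hml : ∀ k, ∫ ω, β₀ k * (v (X ω) k * v (X ω) j) ∂P
          = β₀ k * ∫ ω, v (X ω) k * v (X ω) j ∂P := fun k => integral_const_mul _ _
      rw [he, hfs]
      exact Finset.sum_congr rfl fun k _ => hml k
    rw [h2]
    have h3 : ∀ k, ∫ ω, v (X ω) k * v (X ω) j ∂P = G j k := by
      intro k
      rw [hG]
      show _ = ∫ ω, v (X ω) j * v (X ω) k ∂P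
      congr 1
      funext ω
      ring
    have h4 : ∑ k, β₀ k * G j k = (G *ᵥ β₀) j := by
      simp [Matrix.mulVec, dotProduct, mul_comm]
    simp only [h3]
    rw [h4, hGβ]
    simp
  have hw0 : ∀ i, ∫ ω, (G⁻¹ *ᵥ W ω) i ∂P = 0 := by
    intro i
    have h1 : (fun ω => (G⁻¹ *ᵥ W ω) i) = fun ω => ∑ j, G⁻¹ i j * W ω j := rfl
    have hfs : ∫ ω, ∑ j, G⁻¹ i j * W ω j ∂P = ∑ j, ∫ ω, G⁻¹ i j * W ω j ∂P :=
      integral_finset_sum _ fun j _ => (hWint j).const_mul _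
    have hml : ∀ j, ∫ ω, G⁻¹ i j * W ω j ∂P = G⁻¹ i j * ∫ ω, W ω j ∂P := fun j =>
      integral_const_mul _ _
    rw [h1, hfs]
    simp [hml, hW0]
  -- the fluctuation normaliser Z
  have hZ0 : Z 0 = 1 := by
    rw [hZ]
    simp [zero_dotProduct]
  have hZd : HasFDerivAt Z (0 : (Fin p → ℝ) →L[ℝ] ℝ) 0 := by
    have hz := Zderiv_aux m0 P (fun ω => G⁻¹ *ᵥ W ω) hwi Mw hMw0 hwb hw0
    have hfun : (fun ε : Fin p → ℝ => ∫ ω, Real.exp (ε ⬝ᵥ (G⁻¹ *ᵥ W ω)) ∂P) = Z :=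
      funext fun ε => (hZ ε).symm
    rwa [hfun] at hz
  have hlogZ : HasFDerivAt (fun ε => Real.log (Z ε))
      ((Z 0)⁻¹ • (0 : (Fin p → ℝ) →L[ℝ] ℝ)) 0 :=
    hZd.log (by rw [hZ0]; norm_num)
  -- expansion of the efficient influence function
  have hkey : ∀ ω (u : Fin p → ℝ), u ⬝ᵥ Dstar ω
      = Δstar ω * (u ⬝ᵥ (G⁻¹ *ᵥ v (X ω))) + u ⬝ᵥ (G⁻¹ *ᵥ W ω) := by
    intro ω u
    simp only [hDstar, hW, dotProduct, Matrix.mulVec]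
    rw [Finset.mul_sum, ← Finset.sum_add_distrib]
    refine Finset.sum_congr rfl fun i _ => ?_
    rw [Finset.mul_sum, Finset.mul_sum, Finset.mul_sum, Finset.mul_sum,
      ← Finset.sum_add_distrib]
    refine Finset.sum_congr rfl fun j _ => ?_
    ring
  -- now the pointwise statement
  filter_upwards [hQκ true, hQκ false] with ω hqt hqf
  set r : Fin p → ℝ := G⁻¹ *ᵥ v (X ω) with hr
  set H : ℝ := (if A ω = true then (1:ℝ) else 0) / g true ω
      - (if A ω = false then (1:ℝ) else 0) / g false ω with hH
  set q : ℝ := QbarA ω with hq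
  have hq0 : 0 < q := by
    rw [hq, hQbarA ω]
    cases hA' : A ω
    · simp only [hA']
      norm_num
      linarith [hqf.1]
    · simp only [hA']
      norm_num
      linarith [hqt.1]
  have hq1 : q < 1 := by
    rw [hq, hQbarA ω]
    cases hA' : A ω
    · simp only [hA']
      norm_num
      linarith [hqf.2]
    · simp only [hA']
      norm_num
      linarith [hqt.2]
  have h1q : (0:ℝ) < 1 - q := by linarith
  have he0 : Real.exp (-Real.log (q / (1 - q))) = (1 - q) / q := by
    rw [Real.exp_neg, Real.exp_log (div_pos hq0 h1q), inv_div]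
  have hℓfun : (fun ε => ℓ ε ω) = fun ε : Fin p → ℝ =>
      Y ω * Real.log ((1 + Real.exp (-(Real.log (q / (1 - q)) + H * (ε ⬝ᵥ r))))⁻¹)
      + (1 - Y ω) * Real.log (1 - (1 + Real.exp (-(Real.log (q / (1 - q)) + H * (ε ⬝ᵥ r))))⁻¹)
      + ε ⬝ᵥ (G⁻¹ *ᵥ W ω) - Real.log (Z ε) := by
    funext ε
    rw [hℓ, hpfl]
  -- derivative chain at 0
  have hs : HasFDerivAt (fun ε : Fin p → ℝ => Real.log (q / (1 - q)) + H * (ε ⬝ᵥ r))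
      (H • dotL r) 0 :=
    ((hasFDerivAt_dot r 0).const_mul H).const_add _
  have hexp := hs.fun_neg.exp
  have hpos : (0:ℝ) < 1 + Real.exp (-(Real.log (q / (1 - q)) + H * ((0 : Fin p → ℝ) ⬝ᵥ r))) := by
    positivity
  have hp0 : (1 + Real.exp (-(Real.log (q / (1 - q)) + H * ((0 : Fin p → ℝ) ⬝ᵥ r))))⁻¹ = q := by
    rw [zero_dotProduct, mul_zero, add_zero, he0]
    rw [show 1 + (1 - q) / q = 1 / q by field_simp; ring]
    rw [one_div, inv_inv]
  have h1p := hexp.const_add 1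
  have hinv := (hasDerivAt_inv (ne_of_gt hpos)).comp_hasFDerivAt 0 h1p
  have hlog1 := hinv.log (by
    show (1 + Real.exp _)⁻¹ ≠ 0
    rw [hp0]; exact ne_of_gt hq0)
  have hsub := hinv.const_sub 1
  have hlog2 := hsub.log (by
    show 1 - (1 + Real.exp _)⁻¹ ≠ 0
    rw [hp0]; exact ne_of_gt h1q)
  have hterm1 := hlog1.const_mul (Y ω)
  have hterm2 := hlog2.const_mul (1 - Y ω)
  have ht3 := hasFDerivAt_dot (G⁻¹ *ᵥ W ω) 0
  have htot := ((hterm1.fun_add hterm2).fun_add ht3).fun_sub hlogZ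
  refine ⟨_, hℓfun.symm ▸ htot, fun u => ?_⟩
  rw [hkey ω u, ← hr]
  have hΔ : Δstar ω = H * (Y ω - q) := by
    rw [hΔstar ω, ← hq, ← hH]
  rw [hΔ]
  simp only [ContinuousLinearMap.coe_sub', ContinuousLinearMap.coe_add',
    Pi.sub_apply, Pi.add_apply, ContinuousLinearMap.coe_smul', Pi.smul_apply,
    ContinuousLinearMap.neg_apply, ContinuousLinearMap.zero_apply, smul_eq_mul,
    dotL_apply, zero_dotProduct, mul_zero, add_zero, Function.comp]
  rw [he0]
  have hd : 1 + (1 - q) / q = 1 / q := by field_simp; ring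
  rw [hd]
  field_simp
  ring
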